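/- Let T* > 0, let μ be the exponential distribution with rate 1 on [0,∞) (density e^{−x}), and let λ : [0,T*] → ℝ be continuous with λ(s) > 0 for all s. Define Z : [0,∞) → ℝ by Z(x) = λ(x)·exp(∫₀ˣ (1−λ(s)) ds) for x ≤ T*, and Z(x) = exp(∫₀^{T*} (1−λ(s)) ds) for x > T*. Then for every t ∈ [0,T*], ∫_{(t,∞)} Z dμ = exp(−∫₀ᵗ λ(s) ds). -/

import Mathlib

open MeasureTheory intervalIntegral Real
open scoped NNReal ENNReal

/-- The exponential distribution with rate 1 on `[0,∞)`, as a measure on `ℝ`. -/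
noncomputable def expMeasure1 : Measure ℝ :=
  (volume.restrict (Set.Ici (0:ℝ))).withDensity (fun x => ENNReal.ofReal (Real.exp (-x)))

/-- Under the measure with density `Z^λ` with respect to the standard exponential
reference measure, the default time has survival function `exp (-∫_0^t λ)`. -/
theorem stmt3 (Tstar : ℝ) (hT : 0 < Tstar)
    (l : ℝ → ℝ) (hc : ContinuousOn l (Set.Icc 0 Tstar))
    (hpos : ∀ s ∈ Set.Icc (0:ℝ) Tstar, 0 < l s)
    (Z : ℝ → ℝ)
    (hZ : ∀ x, 0 ≤ x → Z x =
      if x ≤ Tstar then l x * Real.exp (∫ s in (0:ℝ)..x, (1 - l s))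
      else Real.exp (∫ s in (0:ℝ)..Tstar, (1 - l s))) :
    ∀ t ∈ Set.Icc (0:ℝ) Tstar,
      (∫ x in Set.Ioi t, Z x ∂expMeasure1) =
        Real.exp (-∫ s in (0:ℝ)..t, l s) := by
  intro t ht
  obtain ⟨ht0, htT⟩ := ht
  -- continuous extension of l
  set l' : ℝ → ℝ := fun x => l (max 0 (min x Tstar)) with hl'def
  have hmem : ∀ x : ℝ, max 0 (min x Tstar) ∈ Set.Icc (0:ℝ) Tstar := fun x =>
    ⟨le_max_left _ _, max_le hT.le (min_le_right _ _)⟩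
  have hl'cont : Continuous l' :=
    hc.comp_continuous (by fun_prop) hmem
  have hl'eq : ∀ x ∈ Set.Icc (0:ℝ) Tstar, l' x = l x := by
    intro x hx
    simp [hl'def, min_eq_left hx.2, max_eq_right hx.1]
  set G : ℝ → ℝ := fun x => ∫ s in (0:ℝ)..x, l' s with hGdef
  have hGderiv : ∀ x : ℝ, HasDerivAt G (l' x) x := by
    intro x
    exact intervalIntegral.integral_hasDerivAt_right
      (hl'cont.intervalIntegrable _ _)
      (hl'cont.stronglyMeasurable.stronglyMeasurableAtFilter)
      hl'cont.continuousAt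
  -- interval integrals of l agree with those of l'
  have hGeq : ∀ x ∈ Set.Icc (0:ℝ) Tstar, (∫ s in (0:ℝ)..x, l s) = G x := by
    intro x hx
    apply intervalIntegral.integral_congr
    intro s hs
    rw [Set.uIcc_of_le hx.1] at hs
    exact (hl'eq s ⟨hs.1, hs.2.trans hx.2⟩).symm
  have honeminus : ∀ x ∈ Set.Icc (0:ℝ) Tstar,
      (∫ s in (0:ℝ)..x, (1 - l s)) = x - G x := by
    intro x hx
    have h1 : (∫ s in (0:ℝ)..x, (1 - l s)) = ∫ s in (0:ℝ)..x, (1 - l' s) := by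
      apply intervalIntegral.integral_congr
      intro s hs
      rw [Set.uIcc_of_le hx.1] at hs
      show 1 - l s = 1 - l' s
      rw [hl'eq s ⟨hs.1, hs.2.trans hx.2⟩]
    rw [h1, intervalIntegral.integral_sub intervalIntegrable_const
      (hl'cont.intervalIntegrable _ _)]
    simp [hGdef]
  -- step 1: integral against expMeasure1 as a weighted Lebesgue integral
  have hsub : Set.Ioi t ∩ Set.Ici (0:ℝ) = Set.Ioi t := by
    apply Set.inter_eq_left.mpr
    exact fun x hx => le_trans ht0 (le_of_lt hx)
  have hmeasd : Measurable fun x : ℝ => Real.toNNReal (Real.exp (-x)) := by fun_prop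
  have step1 : (∫ x in Set.Ioi t, Z x ∂expMeasure1)
      = ∫ x in Set.Ioi t, Real.exp (-x) * Z x := by
    rw [expMeasure1]
    have : (fun x : ℝ => ENNReal.ofReal (Real.exp (-x)))
        = fun x : ℝ => ((Real.toNNReal (Real.exp (-x)) : ℝ≥0) : ℝ≥0∞) := rfl
    rw [this, setIntegral_withDensity_eq_setIntegral_smul hmeasd Z measurableSet_Ioi,
      Measure.restrict_restrict measurableSet_Ioi, hsub]
    apply setIntegral_congr_fun measurableSet_Ioi
    intro x _
    simp [NNReal.smul_def, Real.coe_toNNReal _ (Real.exp_pos _).le]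
  rw [step1]
  -- the nice representative
  set C : ℝ := Real.exp (Tstar - G Tstar) with hCdef
  set h : ℝ → ℝ := fun x =>
    if x ≤ Tstar then l' x * Real.exp (-(G x)) else C * Real.exp (-x) with hhdef
  have hcongr : ∀ x ∈ Set.Ioi t, Real.exp (-x) * Z x = h x := by
    intro x hx
    have hx0 : (0:ℝ) ≤ x := le_trans ht0 (le_of_lt hx)
    rw [hZ x hx0, hhdef]
    by_cases hxT : x ≤ Tstar
    · simp only [hxT, if_true]
      rw [hl'eq x ⟨hx0, hxT⟩, honeminus x ⟨hx0, hxT⟩]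
      rw [show rexp (-x) * (l x * rexp (x - G x)) = l x * (rexp (-x) * rexp (x - G x)) by ring,
        ← Real.exp_add]
      congr 1
      ring
    · simp only [hxT, if_false]
      rw [honeminus Tstar ⟨hT.le, le_refl _⟩, hCdef]
      ring
  rw [setIntegral_congr_fun measurableSet_Ioi hcongr]
  -- split the integral
  have hunion : Set.Ioc t Tstar ∪ Set.Ioi Tstar = Set.Ioi t := Set.Ioc_union_Ioi_eq_Ioi htT
  have hint1 : IntegrableOn h (Set.Ioc t Tstar) := by
    apply IntegrableOn.congr_fun
      (f := fun x => l' x * Real.exp (-(G x)))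
    · apply Continuous.integrableOn_Ioc
      exact hl'cont.mul (Real.continuous_exp.comp
        ((continuous_iff_continuousAt.mpr fun x => (hGderiv x).continuousAt).neg))
    · intro x hx
      simp [hhdef, hx.2]
    · exact measurableSet_Ioc
  have hint2 : IntegrableOn h (Set.Ioi Tstar) := by
    apply IntegrableOn.congr_fun (f := fun x => C * Real.exp (-x))
    · have h0 := (exp_neg_integrableOn_Ioi Tstar one_pos).const_mul C
      simp only [neg_mul, one_mul] at h0
      exact h0
    · intro x hx
      simp [hhdef, not_le.mpr (show Tstar < x from hx)]
    · exact measurableSet_Ioi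
  rw [← hunion, setIntegral_union (Set.Ioc_disjoint_Ioi le_rfl) measurableSet_Ioi hint1 hint2]
  -- compute the tail integral
  have htail : (∫ x in Set.Ioi Tstar, h x) = Real.exp (-(G Tstar)) := by
    rw [setIntegral_congr_fun measurableSet_Ioi
      (g := fun x => C * Real.exp (-x)) (fun x hx => by simp [hhdef, not_le.mpr (show Tstar < x from hx)])]
    rw [MeasureTheory.integral_const_mul, integral_exp_neg_Ioi, hCdef, ← Real.exp_add]
    ring_nf
  -- compute the middle integral via FTC
  have hmid : (∫ x in Set.Ioc t Tstar, h x)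
      = Real.exp (-(G t)) - Real.exp (-(G Tstar)) := by
    rw [setIntegral_congr_fun measurableSet_Ioc
      (g := fun x => l' x * Real.exp (-(G x))) (fun x hx => by simp [hhdef, hx.2])]
    rw [← intervalIntegral.integral_of_le htT]
    have hF : ∀ x : ℝ, HasDerivAt (fun y => -Real.exp (-(G y)))
        (l' x * Real.exp (-(G x))) x := by
      intro x
      have h1 : HasDerivAt (fun y => -(G y)) (-(l' x)) x := (hGderiv x).neg
      have h2 : HasDerivAt (fun y => Real.exp (-(G y)))
          (Real.exp (-(G x)) * (-(l' x))) x := h1.exp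
      have : HasDerivAt (fun y => -Real.exp (-(G y))) (-(Real.exp (-(G x)) * (-(l' x)))) x :=
        h2.neg
      convert this using 1
      ring
    have hcont : Continuous fun x => l' x * Real.exp (-(G x)) :=
      hl'cont.mul (Real.continuous_exp.comp
        ((continuous_iff_continuousAt.mpr fun x => (hGderiv x).continuousAt).neg))
    rw [intervalIntegral.integral_eq_sub_of_hasDerivAt (fun x _ => hF x)
      (hcont.intervalIntegrable _ _)]
    ring
  rw [hmid, htail, hGeq t ⟨ht0, htT⟩]
  ring
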